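/- Let Ω ⊂ ℝ² be a bounded domain with Poincaré–Friedrichs constant C_PF, let σ ∈ L^∞(Ω) with c̲ := ess inf σ > 0, and let κ ∈ L^∞(Ω) be such that ess inf(σ+κ) ≥ c̲. Let u^σ, u^{σ+κ} ∈ H¹₀(Ω) be the weak solutions of ∇·(σ∇u)=1 and ∇·((σ+κ)∇u)=1 with homogeneous Dirichlet boundary conditions, and let v_κ^σ ∈ H¹₀(Ω) be the unique solution of ∫_Ω σ ∇v_κ^σ·∇w dx = -∫_Ω κ ∇u^σ·∇w dx for all w ∈ H¹₀(Ω). Then, with C' := (‖1‖_{L²(Ω)}·C_PF)/c̲², it holds ‖∇(u^{σ+κ} − u^σ − v_κ^σ)‖_{L²(Ω)} ≤ (C'/c̲) ‖κ‖²_{L^∞(Ω)}. -/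

import Mathlib

open MeasureTheory Filter
open scoped RealInnerProductSpace

noncomputable section

/-- Abbreviation for the plane `ℝ²`. -/
abbrev E2 : Type := EuclideanSpace ℝ (Fin 2)

/-- Membership in `H¹₀(Ω)`: the pair `(u, gu)` — a function together with its (weak)
gradient — lies in `L²(Ω)` and is an `H¹(Ω)`-limit of a sequence of smooth functions
compactly supported in `Ω` (i.e. `u` lies in the closure of `C_c^∞(Ω)` in `H¹(Ω)`). -/
def MemH10 (Ω : Set E2) (u : E2 → ℝ) (gu : E2 → E2) : Prop :=
  MemLp u 2 (volume.restrict Ω) ∧ MemLp gu 2 (volume.restrict Ω) ∧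
  ∃ φ : ℕ → E2 → ℝ,
    (∀ n, ContDiff ℝ (⊤ : ℕ∞) (φ n) ∧ HasCompactSupport (φ n) ∧ tsupport (φ n) ⊆ Ω) ∧
    Tendsto (fun n => ∫ x in Ω, (φ n x - u x) ^ 2) atTop (nhds 0) ∧
    Tendsto (fun n => ∫ x in Ω, ‖gradient (φ n) x - gu x‖ ^ 2) atTop (nhds 0)

section Aux
variable {α : Type*} [MeasurableSpace α] {μ : Measure α}

lemma linfty_bound (f : α → ℝ) (hf : MemLp f ⊤ μ) : ∃ C : ℝ, ∀ᵐ x ∂μ, |f x| ≤ C := by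
  have h2 := hf.2
  rw [eLpNorm_exponent_top] at h2
  obtain ⟨C, hC⟩ := eLpNormEssSup_lt_top_iff_isBoundedUnder.1 h2
  refine ⟨C, ?_⟩
  filter_upwards [eventually_map.1 hC] with x hx
  have : (‖f x‖₊ : ℝ) ≤ (C : ℝ) := by exact_mod_cast hx
  simpa [Real.norm_eq_abs] using this

lemma integrable_bdd_inner {f : α → ℝ} {C : ℝ} (hfm : AEStronglyMeasurable f μ)
    (hbd : ∀ᵐ x ∂μ, |f x| ≤ C) {a b : α → E2} (ha : MemLp a 2 μ) (hb : MemLp b 2 μ) :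
    Integrable (fun x => f x * ⟪a x, b x⟫) μ := by
  have hia : Integrable (fun x => ‖a x‖ ^ 2) μ := (memLp_two_iff_integrable_sq_norm ha.1).1 ha
  have hib : Integrable (fun x => ‖b x‖ ^ 2) μ := (memLp_two_iff_integrable_sq_norm hb.1).1 hb
  have hg : Integrable (fun x => (|C| + 1) / 2 * (‖a x‖ ^ 2 + ‖b x‖ ^ 2)) μ :=
    (hia.add hib).const_mul _
  refine hg.mono' (hfm.mul (ha.1.inner hb.1)) ?_
  filter_upwards [hbd] with x hx
  have h1 : |⟪a x, b x⟫| ≤ ‖a x‖ * ‖b x‖ := abs_real_inner_le_norm _ _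
  have h2 : |f x * ⟪a x, b x⟫| = |f x| * |⟪a x, b x⟫| := abs_mul _ _
  have h3 : |f x| ≤ |C| := hx.trans (le_abs_self C)
  rw [Real.norm_eq_abs, h2]
  nlinarith [abs_nonneg (f x), abs_nonneg (⟪a x, b x⟫), norm_nonneg (a x), norm_nonneg (b x),
    sq_nonneg (‖a x‖ - ‖b x‖)]

lemma integrable_norm_mul {a b : α → E2} (ha : MemLp a 2 μ) (hb : MemLp b 2 μ) :
    Integrable (fun x => ‖a x‖ * ‖b x‖) μ := by
  have hia : Integrable (fun x => ‖a x‖ ^ 2) μ := (memLp_two_iff_integrable_sq_norm ha.1).1 ha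
  have hib : Integrable (fun x => ‖b x‖ ^ 2) μ := (memLp_two_iff_integrable_sq_norm hb.1).1 hb
  refine (((hia.add hib).const_mul ((1:ℝ)/2))).mono' (ha.1.norm.mul hb.1.norm) ?_
  filter_upwards with x
  simp only [Pi.add_apply]
  rw [Real.norm_eq_abs, abs_of_nonneg (by positivity)]
  nlinarith [sq_nonneg (‖a x‖ - ‖b x‖)]

lemma holder_two {a b : α → E2} (ha : MemLp a 2 μ) (hb : MemLp b 2 μ) :
    ∫ x, ‖a x‖ * ‖b x‖ ∂μ ≤
      Real.sqrt (∫ x, ‖a x‖ ^ 2 ∂μ) * Real.sqrt (∫ x, ‖b x‖ ^ 2 ∂μ) := by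
  have hconj : Real.HolderConjugate 2 2 := by constructor <;> norm_num
  have h2 : (ENNReal.ofReal 2) = 2 := by norm_num
  have := integral_mul_le_Lp_mul_Lq_of_nonneg hconj
    (f := fun x => ‖a x‖) (g := fun x => ‖b x‖)
    (Eventually.of_forall fun x => norm_nonneg _)
    (Eventually.of_forall fun x => norm_nonneg _)
    (by rw [h2]; exact ha.norm) (by rw [h2]; exact hb.norm)
  refine this.trans_eq ?_
  rw [Real.sqrt_eq_rpow, Real.sqrt_eq_rpow]
  norm_num [Real.rpow_two]

end Aux

section Aux2
variable {α : Type*} [MeasurableSpace α] {μ : Measure α}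

lemma energy_lower (c : ℝ) {τ : α → ℝ} (hτ : MemLp τ ⊤ μ) (hτc : ∀ᵐ x ∂μ, c ≤ τ x)
    {a : α → E2} (ha : MemLp a 2 μ) :
    c * ∫ x, ‖a x‖ ^ 2 ∂μ ≤ ∫ x, τ x * ⟪a x, a x⟫ ∂μ := by
  obtain ⟨C, hC⟩ := linfty_bound τ hτ
  have hint : Integrable (fun x => τ x * ⟪a x, a x⟫) μ := integrable_bdd_inner hτ.1 hC ha ha
  have hia : Integrable (fun x => ‖a x‖ ^ 2) μ := (memLp_two_iff_integrable_sq_norm ha.1).1 ha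
  rw [← integral_const_mul]
  refine integral_mono_ae (hia.const_mul c) hint ?_
  filter_upwards [hτc] with x hx
  rw [real_inner_self_eq_norm_sq]
  exact mul_le_mul_of_nonneg_right hx (sq_nonneg _)

lemma cNa_le {c k : ℝ} (hc : 0 < c) (hk : 0 ≤ k) {τ f : α → ℝ} (hτ : MemLp τ ⊤ μ)
    (hτc : ∀ᵐ x ∂μ, c ≤ τ x) (hfm : AEStronglyMeasurable f μ) (hf : ∀ᵐ x ∂μ, |f x| ≤ k)
    {a b : α → E2} (ha : MemLp a 2 μ) (hb : MemLp b 2 μ)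
    (heq : (∫ x, τ x * ⟪a x, a x⟫ ∂μ) = -∫ x, f x * ⟪b x, a x⟫ ∂μ) :
    c * Real.sqrt (∫ x, ‖a x‖ ^ 2 ∂μ) ≤ k * Real.sqrt (∫ x, ‖b x‖ ^ 2 ∂μ) := by
  set Na := Real.sqrt (∫ x, ‖a x‖ ^ 2 ∂μ) with hNa
  set Nb := Real.sqrt (∫ x, ‖b x‖ ^ 2 ∂μ) with hNb
  have hNa0 : 0 ≤ Na := Real.sqrt_nonneg _
  have hNb0 : 0 ≤ Nb := Real.sqrt_nonneg _
  have hsq : ∫ x, ‖a x‖ ^ 2 ∂μ = Na ^ 2 := by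
    rw [hNa, Real.sq_sqrt (integral_nonneg fun x => sq_nonneg _)]
  have hint : Integrable (fun x => f x * ⟪b x, a x⟫) μ := integrable_bdd_inner hfm hf hb ha
  have h2 : -∫ x, f x * ⟪b x, a x⟫ ∂μ ≤ k * (Nb * Na) := by
    calc -∫ x, f x * ⟪b x, a x⟫ ∂μ ≤ |∫ x, f x * ⟪b x, a x⟫ ∂μ| := neg_le_abs _
    _ ≤ ∫ x, |f x * ⟪b x, a x⟫| ∂μ := by
        have h := norm_integral_le_integral_norm (μ := μ) (fun x => f x * ⟪b x, a x⟫)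
        simp only [Real.norm_eq_abs] at h
        exact h
    _ ≤ ∫ x, k * (‖b x‖ * ‖a x‖) ∂μ := by
        refine integral_mono_ae hint.abs ((integrable_norm_mul hb ha).const_mul k) ?_
        filter_upwards [hf] with x hx
        rw [abs_mul]
        exact mul_le_mul hx (abs_real_inner_le_norm _ _) (abs_nonneg _) hk
    _ = k * ∫ x, ‖b x‖ * ‖a x‖ ∂μ := integral_const_mul _ _
    _ ≤ k * (Nb * Na) := mul_le_mul_of_nonneg_left (holder_two hb ha) hk
  have hmain : c * Na ^ 2 ≤ k * (Nb * Na) := by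
    rw [← hsq]; exact (energy_lower c hτ hτc ha).trans (heq ▸ h2)
  rcases eq_or_lt_of_le hNa0 with h0 | h0
  · rw [← h0, mul_zero]; positivity
  · rw [← mul_le_mul_iff_left₀ h0]
    nlinarith [hmain]

lemma holder_one [IsFiniteMeasure μ] {w : α → ℝ} (hw : MemLp w 2 μ) :
    -∫ x, w x ∂μ ≤ Real.sqrt ((μ Set.univ).toReal) * Real.sqrt (∫ x, (w x) ^ 2 ∂μ) := by
  have hconj : Real.HolderConjugate 2 2 := by constructor <;> norm_num
  have h2 : (ENNReal.ofReal 2) = 2 := by norm_num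
  have habs : MemLp (fun x => |w x|) 2 μ := by
    simpa [Real.norm_eq_abs] using hw.norm
  have hh := integral_mul_le_Lp_mul_Lq_of_nonneg hconj
    (f := fun x => |w x|) (g := fun _ => (1:ℝ))
    (Eventually.of_forall fun x => abs_nonneg _)
    (Eventually.of_forall fun x => zero_le_one)
    (by rw [h2]; exact habs) (by rw [h2]; exact memLp_const 1)
  have e1 : ∫ x, |w x| * 1 ∂μ = ∫ x, |w x| ∂μ := by simp
  have e2 : (∫ x, |w x| ^ (2:ℝ) ∂μ) = ∫ x, (w x) ^ 2 ∂μ := by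
    apply integral_congr_ae; filter_upwards with x
    rw [show ((2:ℝ) = ((2:ℕ):ℝ)) by norm_num, Real.rpow_natCast]
    simp [sq_abs]
  have e3 : (∫ x, (1:ℝ) ^ (2:ℝ) ∂μ) = (μ Set.univ).toReal := by simp; rfl
  rw [e1, e2, e3] at hh
  calc -∫ x, w x ∂μ ≤ |∫ x, w x ∂μ| := neg_le_abs _
  _ ≤ ∫ x, |w x| ∂μ := by
      have h := norm_integral_le_integral_norm (μ := μ) w
      simp only [Real.norm_eq_abs] at h
      exact h
  _ ≤ (∫ x, (w x) ^ 2 ∂μ) ^ ((1:ℝ)/2) * ((μ Set.univ).toReal) ^ ((1:ℝ)/2) := hh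
  _ = Real.sqrt ((μ Set.univ).toReal) * Real.sqrt (∫ x, (w x) ^ 2 ∂μ) := by
      rw [Real.sqrt_eq_rpow, Real.sqrt_eq_rpow, mul_comm]

end Aux2

section SubAux
variable {α : Type*} [MeasurableSpace α] {μ : Measure α}

lemma tendsto_sq_sub {F : Type*} [NormedAddCommGroup F] {A B : ℕ → α → F}
    (hA : ∀ n, MemLp (A n) 2 μ) (hB : ∀ n, MemLp (B n) 2 μ)
    (h1 : Tendsto (fun n => ∫ x, ‖A n x‖ ^ 2 ∂μ) atTop (nhds 0))
    (h2 : Tendsto (fun n => ∫ x, ‖B n x‖ ^ 2 ∂μ) atTop (nhds 0)) :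
    Tendsto (fun n => ∫ x, ‖A n x - B n x‖ ^ 2 ∂μ) atTop (nhds 0) := by
  have key : ∀ n, ∫ x, ‖A n x - B n x‖ ^ 2 ∂μ
      ≤ 2 * (∫ x, ‖A n x‖ ^ 2 ∂μ) + 2 * (∫ x, ‖B n x‖ ^ 2 ∂μ) := by
    intro n
    have hiA : Integrable (fun x => ‖A n x‖ ^ 2) μ :=
      (memLp_two_iff_integrable_sq_norm (hA n).1).1 (hA n)
    have hiB : Integrable (fun x => ‖B n x‖ ^ 2) μ :=
      (memLp_two_iff_integrable_sq_norm (hB n).1).1 (hB n)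
    have hiAB : Integrable (fun x => ‖A n x - B n x‖ ^ 2) μ :=
      (memLp_two_iff_integrable_sq_norm ((hA n).sub (hB n)).1).1 ((hA n).sub (hB n))
    calc ∫ x, ‖A n x - B n x‖ ^ 2 ∂μ
        ≤ ∫ x, (2 * ‖A n x‖ ^ 2 + 2 * ‖B n x‖ ^ 2) ∂μ := by
          refine integral_mono hiAB ((hiA.const_mul 2).add (hiB.const_mul 2)) fun x => ?_
          have := norm_sub_le (A n x) (B n x)
          nlinarith [norm_nonneg (A n x), norm_nonneg (B n x), norm_nonneg (A n x - B n x),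
            sq_nonneg (‖A n x‖ - ‖B n x‖)]
      _ = 2 * (∫ x, ‖A n x‖ ^ 2 ∂μ) + 2 * (∫ x, ‖B n x‖ ^ 2 ∂μ) := by
          rw [integral_add (hiA.const_mul 2) (hiB.const_mul 2), integral_const_mul,
            integral_const_mul]
  have hlim : Tendsto (fun n => 2 * (∫ x, ‖A n x‖ ^ 2 ∂μ) + 2 * (∫ x, ‖B n x‖ ^ 2 ∂μ))
      atTop (nhds 0) := by
    have := (h1.const_mul 2).add (h2.const_mul 2)
    simpa using this
  exact squeeze_zero (fun n => integral_nonneg fun x => sq_nonneg _) key hlim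

end SubAux

lemma gradient_sub' {f g : E2 → ℝ} (hf : Differentiable ℝ f) (hg : Differentiable ℝ g)
    (x : E2) : gradient (fun y => f y - g y) x = gradient f x - gradient g x := by
  unfold gradient
  rw [fderiv_fun_sub (hf x) (hg x), map_sub]

lemma smooth_cs_memL2R {μ' : Measure E2} [IsFiniteMeasure μ'] {φ : E2 → ℝ}
    (h1 : ContDiff ℝ (⊤ : ℕ∞) φ) (h2 : HasCompactSupport φ) : MemLp φ 2 μ' := by
  obtain ⟨C, hC⟩ := h2.exists_bound_of_continuous h1.continuous
  exact (memLp_top_of_bound h1.continuous.aestronglyMeasurable C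
    (Eventually.of_forall hC)).mono_exponent le_top

lemma smooth_cs_grad_memL2 {μ' : Measure E2} [IsFiniteMeasure μ'] {φ : E2 → ℝ}
    (h1 : ContDiff ℝ (⊤ : ℕ∞) φ) (h2 : HasCompactSupport φ) :
    MemLp (gradient φ) 2 μ' := by
  have hcont : Continuous (gradient φ) := by
    have hfd : Continuous (fderiv ℝ φ) := h1.continuous_fderiv (by simp)
    exact (InnerProductSpace.toDual ℝ E2).symm.continuous.comp hfd
  have hcs : HasCompactSupport (gradient φ) := by
    have := (h2.fderiv ℝ).comp_left
      (g := fun L => (InnerProductSpace.toDual ℝ E2).symm L) (map_zero _)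
    exact this
  obtain ⟨C, hC⟩ := hcs.exists_bound_of_continuous hcont
  exact (memLp_top_of_bound hcont.aestronglyMeasurable C
    (Eventually.of_forall hC)).mono_exponent le_top

lemma MemH10.sub {Ω : Set E2} {u u' : E2 → ℝ} {gu gu' : E2 → E2}
    [IsFiniteMeasure (volume.restrict Ω)]
    (h : MemH10 Ω u gu) (h' : MemH10 Ω u' gu') :
    MemH10 Ω (fun x => u x - u' x) (fun x => gu x - gu' x) := by
  obtain ⟨hu2, hgu2, φ, hφ, hφu, hφg⟩ := h
  obtain ⟨hu2', hgu2', ψ, hψ, hψu, hψg⟩ := h'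
  refine ⟨hu2.sub hu2', hgu2.sub hgu2', fun n x => φ n x - ψ n x, fun n => ?_, ?_, ?_⟩
  · refine ⟨(hφ n).1.sub (hψ n).1, ?_, ?_⟩
    · have := ((hφ n).2.1).add (HasCompactSupport.neg ((hψ n).2.1))
      show HasCompactSupport (fun x => φ n x - ψ n x)
      rw [show (fun x => φ n x - ψ n x) = φ n + -ψ n from funext fun x => sub_eq_add_neg _ _]
      exact this
    · have hsub : Function.support (fun x => φ n x - ψ n x)
          ⊆ tsupport (φ n) ∪ tsupport (ψ n) :=
        (Function.support_sub (φ n) (ψ n)).trans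
          (Set.union_subset_union (subset_tsupport _) (subset_tsupport _))
      have h2 : tsupport (fun x => φ n x - ψ n x) ⊆ tsupport (φ n) ∪ tsupport (ψ n) :=
        closure_minimal hsub ((isClosed_tsupport _).union (isClosed_tsupport _))
      exact h2.trans (Set.union_subset (hφ n).2.2 (hψ n).2.2)
  · have := tendsto_sq_sub (μ := volume.restrict Ω)
      (A := fun n x => φ n x - u x) (B := fun n x => ψ n x - u' x)
      (fun n => (smooth_cs_memL2R (hφ n).1 (hφ n).2.1).sub hu2)
      (fun n => (smooth_cs_memL2R (hψ n).1 (hψ n).2.1).sub hu2')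
      (by simpa [Real.norm_eq_abs, sq_abs] using hφu)
      (by simpa [Real.norm_eq_abs, sq_abs] using hψu)
    have heq : ∀ n, (∫ x in Ω, ‖(φ n x - u x) - (ψ n x - u' x)‖ ^ 2)
        = ∫ x in Ω, ((fun x => φ n x - ψ n x) x - (u x - u' x)) ^ 2 := by
      intro n
      refine integral_congr_ae (Eventually.of_forall fun x => ?_)
      dsimp only
      rw [Real.norm_eq_abs, sq_abs]
      ring_nf
    simp only [heq] at this
    exact this
  · have := tendsto_sq_sub (μ := volume.restrict Ω)
      (A := fun n x => gradient (φ n) x - gu x) (B := fun n x => gradient (ψ n) x - gu' x)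
      (fun n => (smooth_cs_grad_memL2 (hφ n).1 (hφ n).2.1).sub hgu2)
      (fun n => (smooth_cs_grad_memL2 (hψ n).1 (hψ n).2.1).sub hgu2')
      hφg hψg
    have heq : ∀ n, (∫ x in Ω, ‖(gradient (φ n) x - gu x) - (gradient (ψ n) x - gu' x)‖ ^ 2)
        = ∫ x in Ω, ‖gradient (fun y => φ n y - ψ n y) x - (gu x - gu' x)‖ ^ 2 := by
      intro n
      refine integral_congr_ae (Eventually.of_forall fun x => ?_)
      dsimp only
      rw [gradient_sub' ((hφ n).1.differentiable (by simp)) ((hψ n).1.differentiable (by simp))]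
      congr 1
      rw [show ∀ a b c d : E2, a - b - (c - d) = a - c - (b - d) from fun a b c d => by abel]
    simp only [heq] at this
    exact this

set_option maxHeartbeats 1000000

/-- With `c̲ := ess inf σ > 0`, `ess inf (σ+κ) ≥ c̲`, weak solutions
`u^σ, u^{σ+κ} ∈ H¹₀(Ω)` of `∇·(σ∇u) = 1` resp. `∇·((σ+κ)∇u) = 1`, and `v_κ^σ ∈ H¹₀(Ω)` the
solution of the linearized problem `∫_Ω σ ∇v·∇w = -∫_Ω κ ∇u^σ·∇w` for all `w ∈ H¹₀(Ω)`,
it holds `‖∇(u^{σ+κ} − u^σ − v_κ^σ)‖_{L²} ≤ (C'/c̲) ‖κ‖²_{L^∞}`, where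
`C' := ‖1‖_{L²(Ω)} · C_PF / c̲²` and `C_PF` is a Poincaré–Friedrichs constant of `Ω`. -/
theorem statement5 (Ω : Set E2) (hΩopen : IsOpen Ω) (hΩconn : IsConnected Ω)
    (hΩbdd : Bornology.IsBounded Ω)
    (C_PF : ℝ) (hC : 0 < C_PF)
    (hPF : ∀ v gv, MemH10 Ω v gv →
      Real.sqrt (∫ x in Ω, (v x) ^ 2) ≤ C_PF * Real.sqrt (∫ x in Ω, ‖gv x‖ ^ 2))
    (σ κ : E2 → ℝ)
    (hσ : MemLp σ ⊤ (volume.restrict Ω)) (hκ : MemLp κ ⊤ (volume.restrict Ω))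
    (hσ0 : 0 < essInf σ (volume.restrict Ω))
    (hσκ0 : essInf σ (volume.restrict Ω) ≤ essInf (fun x => σ x + κ x) (volume.restrict Ω))
    (uσ uσκ v : E2 → ℝ) (guσ guσκ gv : E2 → E2)
    (huσ : MemH10 Ω uσ guσ) (huσκ : MemH10 Ω uσκ guσκ) (hv : MemH10 Ω v gv)
    (hsolσ : ∀ w gw, MemH10 Ω w gw →
      (∫ x in Ω, σ x * ⟪guσ x, gw x⟫) = -∫ x in Ω, w x)
    (hsolσκ : ∀ w gw, MemH10 Ω w gw →
      (∫ x in Ω, (σ x + κ x) * ⟪guσκ x, gw x⟫) = -∫ x in Ω, w x)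
    (hsolv : ∀ w gw, MemH10 Ω w gw →
      (∫ x in Ω, σ x * ⟪gv x, gw x⟫) = -∫ x in Ω, κ x * ⟪guσ x, gw x⟫) :
    Real.sqrt (∫ x in Ω, ‖guσκ x - guσ x - gv x‖ ^ 2)
      ≤ (Real.sqrt ((volume Ω).toReal) * C_PF / (essInf σ (volume.restrict Ω)) ^ 2)
          / essInf σ (volume.restrict Ω) *
          (essSup (fun x => |κ x|) (volume.restrict Ω)) ^ 2 := by

  classical
  set μ := volume.restrict Ω with hμdef
  have hvol : volume Ω < ⊤ := hΩbdd.measure_lt_top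
  haveI hfin : IsFiniteMeasure μ := ⟨by rwa [Measure.restrict_apply_univ]⟩
  have hμne : μ ≠ 0 := by
    intro h
    have hpos : 0 < volume Ω := hΩopen.measure_pos volume hΩconn.nonempty
    rw [← Measure.restrict_apply_univ Ω, ← hμdef, h] at hpos
    simp at hpos
  haveI : NeBot (ae μ) := ae_neBot.2 hμne
  set c := essInf σ μ with hc_def
  set k := essSup (fun x => |κ x|) μ with hk_def
  obtain ⟨Cσ, hCσ⟩ := linfty_bound σ hσ
  obtain ⟨Cκ, hCκ⟩ := linfty_bound κ hκ
  have hσae : ∀ᵐ x ∂μ, c ≤ σ x := by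
    refine ae_essInf_le ⟨-Cσ, eventually_map.2 ?_⟩
    filter_upwards [hCσ] with x hx
    exact (neg_le_neg hx).trans (neg_abs_le _)
  have hκae : ∀ᵐ x ∂μ, |κ x| ≤ k := by
    refine ae_le_essSup ⟨Cκ, eventually_map.2 ?_⟩
    filter_upwards [hCκ] with x hx
    exact hx
  have hk0 : (0:ℝ) ≤ k := by
    obtain ⟨x, hx⟩ := hκae.exists
    exact (abs_nonneg _).trans hx
  clear_value c k
  have hσκae : ∀ᵐ x ∂μ, c ≤ σ x + κ x := by
    have hbd : ∀ᵐ x ∂μ, -(Cσ + Cκ) ≤ σ x + κ x := by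
      filter_upwards [hCσ, hCκ] with x h1 h2
      have := abs_add_le (σ x) (κ x)
      have h3 : |σ x + κ x| ≤ Cσ + Cκ := this.trans (add_le_add h1 h2)
      exact (neg_le_neg h3).trans (neg_abs_le _)
    have h := ae_essInf_le (f := fun x => σ x + κ x) (μ := μ) ⟨-(Cσ + Cκ), eventually_map.2 hbd⟩
    filter_upwards [h] with x hx
    exact le_trans hσκ0 hx
  -- L² memberships
  have hgσκ2 : MemLp guσκ 2 μ := huσκ.2.1
  have hgσ2 : MemLp guσ 2 μ := huσ.2.1
  have hgv2 : MemLp gv 2 μ := hv.2.1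
  have hd2 : MemLp (fun x => guσκ x - guσ x) 2 μ := hgσκ2.sub hgσ2
  have he2 : MemLp (fun x => guσκ x - guσ x - gv x) 2 μ := hd2.sub hgv2
  -- test functions
  have hw1 : MemH10 Ω (fun x => uσκ x - uσ x) (fun x => guσκ x - guσ x) :=
    MemH10.sub huσκ huσ
  have hw2 : MemH10 Ω (fun x => uσκ x - uσ x - v x) (fun x => guσκ x - guσ x - gv x) :=
    MemH10.sub hw1 hv
  -- integrability helpers
  have intσ : ∀ (a b : E2 → E2), MemLp a 2 μ → MemLp b 2 μ →
      Integrable (fun x => σ x * ⟪a x, b x⟫) μ :=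
    fun a b ha hb => integrable_bdd_inner hσ.1 hCσ ha hb
  have intκ : ∀ (a b : E2 → E2), MemLp a 2 μ → MemLp b 2 μ →
      Integrable (fun x => κ x * ⟪a x, b x⟫) μ :=
    fun a b ha hb => integrable_bdd_inner hκ.1 hCκ ha hb
  -- Step A : c * ‖∇u^{σ+κ}‖ ≤ √|Ω| * C_PF
  have hσκtop : MemLp (fun x => σ x + κ x) ⊤ μ := hσ.add hκ
  have hNA : c * Real.sqrt (∫ x in Ω, ‖guσκ x‖ ^ 2) ≤ Real.sqrt ((volume Ω).toReal) * C_PF := by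
    set NA := Real.sqrt (∫ x in Ω, ‖guσκ x‖ ^ 2) with hNAdef
    have hNA0 : 0 ≤ NA := Real.sqrt_nonneg _
    have hsq : (∫ x in Ω, ‖guσκ x‖ ^ 2) = NA ^ 2 := by
      rw [hNAdef, Real.sq_sqrt (integral_nonneg fun x => sq_nonneg _)]
    have h1 : c * NA ^ 2 ≤ -∫ x in Ω, uσκ x := by
      rw [← hsq]
      exact (energy_lower c hσκtop hσκae hgσκ2).trans_eq (hsolσκ uσκ guσκ huσκ)
    have h2 : -∫ x in Ω, uσκ x ≤
        Real.sqrt ((volume Ω).toReal) * Real.sqrt (∫ x in Ω, (uσκ x) ^ 2) := by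
      have := holder_one (μ := μ) huσκ.1
      rwa [Measure.restrict_apply_univ] at this
    have h3 : Real.sqrt (∫ x in Ω, (uσκ x) ^ 2) ≤ C_PF * NA := hPF uσκ guσκ huσκ
    have hvol0 : (0:ℝ) ≤ Real.sqrt ((volume Ω).toReal) := Real.sqrt_nonneg _
    have hmain : c * NA ^ 2 ≤ Real.sqrt ((volume Ω).toReal) * (C_PF * NA) :=
      h1.trans (h2.trans (mul_le_mul_of_nonneg_left h3 hvol0))
    rcases eq_or_lt_of_le hNA0 with h0 | h0
    · rw [← h0, mul_zero]
      positivity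
    · rw [← mul_le_mul_iff_left₀ h0]
      nlinarith [hmain]
  -- Step B : weak identity for d := guσκ - guσ
  have I1 := intσ guσκ (fun x => guσκ x - guσ x) hgσκ2 hd2
  have I2 := intκ guσκ (fun x => guσκ x - guσ x) hgσκ2 hd2
  have I3 := intσ guσ (fun x => guσκ x - guσ x) hgσ2 hd2
  have e1 : (∫ x in Ω, (σ x + κ x) * ⟪guσκ x, guσκ x - guσ x⟫)
      = -∫ x in Ω, (uσκ x - uσ x) := hsolσκ _ _ hw1
  have e2 : (∫ x in Ω, σ x * ⟪guσ x, guσκ x - guσ x⟫)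
      = -∫ x in Ω, (uσκ x - uσ x) := hsolσ _ _ hw1
  have split1 : (∫ x in Ω, (σ x + κ x) * ⟪guσκ x, guσκ x - guσ x⟫)
      = (∫ x in Ω, σ x * ⟪guσκ x, guσκ x - guσ x⟫)
        + ∫ x in Ω, κ x * ⟪guσκ x, guσκ x - guσ x⟫ := by
    rw [← integral_add I1 I2]
    exact integral_congr_ae (Eventually.of_forall fun x => by ring)
  have split2 : (∫ x in Ω, σ x * ⟪guσκ x - guσ x, guσκ x - guσ x⟫)
      = (∫ x in Ω, σ x * ⟪guσκ x, guσκ x - guσ x⟫)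
        - ∫ x in Ω, σ x * ⟪guσ x, guσκ x - guσ x⟫ := by
    rw [← integral_sub I1 I3]
    refine integral_congr_ae (Eventually.of_forall fun x => ?_)
    dsimp only [Pi.sub_apply]
    rw [inner_sub_left]
    ring
  have eq_d : (∫ x in Ω, σ x * ⟪guσκ x - guσ x, guσκ x - guσ x⟫)
      = -∫ x in Ω, κ x * ⟪guσκ x, guσκ x - guσ x⟫ := by linarith
  have hND : c * Real.sqrt (∫ x in Ω, ‖guσκ x - guσ x‖ ^ 2)
      ≤ k * Real.sqrt (∫ x in Ω, ‖guσκ x‖ ^ 2) :=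
    cNa_le hσ0 hk0 hσ hσae hκ.1 hκae hd2 hgσκ2 eq_d
  -- Step C : weak identity for e := guσκ - guσ - gv
  have J1 := intσ guσκ (fun x => guσκ x - guσ x - gv x) hgσκ2 he2
  have J2 := intκ guσκ (fun x => guσκ x - guσ x - gv x) hgσκ2 he2
  have J3 := intσ guσ (fun x => guσκ x - guσ x - gv x) hgσ2 he2
  have J4 := intκ guσ (fun x => guσκ x - guσ x - gv x) hgσ2 he2
  have J5 := intσ gv (fun x => guσκ x - guσ x - gv x) hgv2 he2
  have f1 : (∫ x in Ω, (σ x + κ x) * ⟪guσκ x, guσκ x - guσ x - gv x⟫)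
      = -∫ x in Ω, (uσκ x - uσ x - v x) := hsolσκ _ _ hw2
  have f2 : (∫ x in Ω, σ x * ⟪guσ x, guσκ x - guσ x - gv x⟫)
      = -∫ x in Ω, (uσκ x - uσ x - v x) := hsolσ _ _ hw2
  have f3 : (∫ x in Ω, σ x * ⟪gv x, guσκ x - guσ x - gv x⟫)
      = -∫ x in Ω, κ x * ⟪guσ x, guσκ x - guσ x - gv x⟫ := hsolv _ _ hw2
  have splitA : (∫ x in Ω, (σ x + κ x) * ⟪guσκ x, guσκ x - guσ x - gv x⟫)
      = (∫ x in Ω, σ x * ⟪guσκ x, guσκ x - guσ x - gv x⟫)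
        + ∫ x in Ω, κ x * ⟪guσκ x, guσκ x - guσ x - gv x⟫ := by
    rw [← integral_add J1 J2]
    exact integral_congr_ae (Eventually.of_forall fun x => by ring)
  have J6 := intσ (fun x => guσκ x - guσ x) (fun x => guσκ x - guσ x - gv x) hd2 he2
  have sB1 : (∫ x in Ω, σ x * ⟪guσκ x - guσ x, guσκ x - guσ x - gv x⟫)
      = (∫ x in Ω, σ x * ⟪guσκ x, guσκ x - guσ x - gv x⟫)
        - ∫ x in Ω, σ x * ⟪guσ x, guσκ x - guσ x - gv x⟫ := by
    rw [← integral_sub J1 J3]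
    refine integral_congr_ae (Eventually.of_forall fun x => ?_)
    dsimp only [Pi.sub_apply]
    rw [inner_sub_left]
    ring
  have sB2 : (∫ x in Ω, σ x * ⟪guσκ x - guσ x - gv x, guσκ x - guσ x - gv x⟫)
      = (∫ x in Ω, σ x * ⟪guσκ x - guσ x, guσκ x - guσ x - gv x⟫)
        - ∫ x in Ω, σ x * ⟪gv x, guσκ x - guσ x - gv x⟫ := by
    rw [← integral_sub J6 J5]
    refine integral_congr_ae (Eventually.of_forall fun x => ?_)
    dsimp only [Pi.sub_apply]
    rw [inner_sub_left]
    ring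
  have splitC : (∫ x in Ω, κ x * ⟪guσκ x - guσ x, guσκ x - guσ x - gv x⟫)
      = (∫ x in Ω, κ x * ⟪guσκ x, guσκ x - guσ x - gv x⟫)
        - ∫ x in Ω, κ x * ⟪guσ x, guσκ x - guσ x - gv x⟫ := by
    rw [← integral_sub J2 J4]
    refine integral_congr_ae (Eventually.of_forall fun x => ?_)
    dsimp only [Pi.sub_apply]
    rw [inner_sub_left]
    ring
  have eq_e : (∫ x in Ω, σ x * ⟪guσκ x - guσ x - gv x, guσκ x - guσ x - gv x⟫)
      = -∫ x in Ω, κ x * ⟪guσκ x - guσ x, guσκ x - guσ x - gv x⟫ := by linarith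
  have hNE : c * Real.sqrt (∫ x in Ω, ‖guσκ x - guσ x - gv x‖ ^ 2)
      ≤ k * Real.sqrt (∫ x in Ω, ‖guσκ x - guσ x‖ ^ 2) :=
    cNa_le hσ0 hk0 hσ hσae hκ.1 hκae he2 hd2 eq_e
  -- conclusion
  set NE := Real.sqrt (∫ x in Ω, ‖guσκ x - guσ x - gv x‖ ^ 2) with hNEdef
  set ND := Real.sqrt (∫ x in Ω, ‖guσκ x - guσ x‖ ^ 2) with hNDdef
  set NA := Real.sqrt (∫ x in Ω, ‖guσκ x‖ ^ 2) with hNAdef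
  set S := Real.sqrt ((volume Ω).toReal) * C_PF with hSdef
  have hS0 : 0 ≤ S := by
    rw [hSdef]
    positivity
  have hNE0 : 0 ≤ NE := Real.sqrt_nonneg _
  have hND0 : 0 ≤ ND := Real.sqrt_nonneg _
  have hNA0 : 0 ≤ NA := Real.sqrt_nonneg _
  clear_value NE ND NA S
  have t1 : c ^ 2 * (c * NE) ≤ c ^ 2 * (k * ND) :=
    mul_le_mul_of_nonneg_left hNE (by positivity)
  have t2 : (c * k) * (c * ND) ≤ (c * k) * (k * NA) :=
    mul_le_mul_of_nonneg_left hND (by positivity)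
  have t3 : k ^ 2 * (c * NA) ≤ k ^ 2 * S :=
    mul_le_mul_of_nonneg_left hNA (by positivity)
  have key : c ^ 2 * c * NE ≤ S * k ^ 2 := by nlinarith [t1, t2, t3]
  have hgoal : S / c ^ 2 / c * k ^ 2 = S * k ^ 2 / (c ^ 2 * c) := by
    field_simp
  rw [hgoal, le_div_iff₀ (by positivity)]
  nlinarith [key]
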